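/- The circulant digraph Cay(ℤ₁₂; 3, 4, 6) has no hamiltonian circuit. -/

import Mathlib

/-- DFS checker: is there a path of length `n` from `v` to `0` using steps
in `{3,4,6}` whose intermediate vertices are fresh (not in `visited`) and distinct? -/
def dfs346 (visited : List (ZMod 12)) (v : ZMod 12) : ℕ → Bool
  | 0 => false
  | 1 => decide (v + 3 = 0) || decide (v + 4 = 0) || decide (v + 6 = 0)
  | n+2 => ([3, 4, 6] : List (ZMod 12)).any fun d =>
      decide ((v + d) ∉ visited) && dfs346 ((v + d) :: visited) (v + d) (n + 1)

lemma dfs346_sound : ∀ (n : ℕ) (visited : List (ZMod 12)) (w : ℕ → ZMod 12),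
    0 < n →
    (∀ i, i < n → w (i+1) - w i ∈ ({3, 4, 6} : Set (ZMod 12))) →
    w n = 0 →
    (∀ i, 1 ≤ i → i < n → w i ∉ visited) →
    (∀ i j, 1 ≤ i → i < j → j < n → w i ≠ w j) →
    dfs346 visited (w 0) n = true := by
  intro n
  induction n with
  | zero => intro _ _ h; exact absurd h (lt_irrefl 0)
  | succ m ih =>
    intro visited w _ hstep hend hfresh hdist
    have hd' : w 1 - w 0 = 3 ∨ w 1 - w 0 = 4 ∨ w 1 - w 0 = 6 := by
      simpa using hstep 0 (Nat.succ_pos m)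
    have hw1 : w 0 + (w 1 - w 0) = w 1 := by ring
    match m with
    | 0 =>
      have key : w 0 + (w 1 - w 0) = 0 := by rw [hw1]; exact hend
      simp only [dfs346, Bool.or_eq_true, decide_eq_true_eq]
      rcases hd' with h | h | h
      · exact Or.inl (Or.inl (by rw [← h]; exact key))
      · exact Or.inl (Or.inr (by rw [← h]; exact key))
      · exact Or.inr (by rw [← h]; exact key)
    | m+1 =>
      have hrec : dfs346 (w 1 :: visited) (w 1) (m+1) = true := by
        have := ih (w 1 :: visited) (fun i => w (i+1)) (Nat.succ_pos m) ?_ ?_ ?_ ?_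
        · simpa using this
        · exact fun i hi => hstep (i+1) (by omega)
        · exact hend
        · intro i h1 h2
          simp only [List.mem_cons, not_or]
          exact ⟨(hdist 1 (i+1) le_rfl (by omega) (by omega)).symm,
            hfresh (i+1) (by omega) (by omega)⟩
        · exact fun i j h1 h2 h3 => hdist (i+1) (j+1) (by omega) (by omega) (by omega)
      simp only [dfs346, List.any_eq_true]
      refine ⟨w 1 - w 0, ?_, ?_⟩
      · rcases hd' with h | h | h <;> simp [h]
      · rw [hw1, Bool.and_eq_true, decide_eq_true_eq]
        exact ⟨hfresh 1 le_rfl (by omega), hrec⟩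

lemma dfs346_false : dfs346 [0] 0 12 = false := by decide

/-- The circulant digraph `Cay(ℤ₁₂; 3, 4, 6)` has no hamiltonian circuit. -/
theorem no_ham_circuit_Z12_346 :
    ¬ ∃ σ : Equiv.Perm (ZMod 12),
      (∀ v : ZMod 12, σ v - v ∈ ({3, 4, 6} : Set (ZMod 12))) ∧
      (∀ v w : ZMod 12, ∃ i : ℕ, (σ ^ i) v = w) := by
  rintro ⟨σ, h1, h2⟩
  set f : ZMod 12 → ZMod 12 := ⇑σ with hf
  have hper : Function.IsPeriodicPt f (orderOf σ) 0 := by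
    show f^[orderOf σ] 0 = 0
    rw [hf, Equiv.Perm.iterate_eq_pow, pow_orderOf_eq_one]
    rfl
  have hm : 0 < Function.minimalPeriod f 0 :=
    hper.minimalPeriod_pos (orderOf_pos σ)
  set m := Function.minimalPeriod f 0 with hmdef
  -- surjectivity of i ↦ f^[i] 0 on Fin m
  have hsurj : Function.Surjective (fun i : Fin m => f^[i.1] 0) := by
    intro y
    obtain ⟨i, hi⟩ := h2 0 y
    refine ⟨⟨i % m, Nat.mod_lt i hm⟩, ?_⟩
    simp only
    rw [Function.iterate_mod_minimalPeriod_eq]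
    rw [hf, Equiv.Perm.iterate_eq_pow]
    exact hi
  have hinj : Function.Injective (fun i : Fin m => f^[i.1] 0) := by
    intro i j hij
    exact Fin.ext (Function.iterate_injOn_Iio_minimalPeriod i.2 j.2 hij)
  have h12le : 12 ≤ m := by
    have := Fintype.card_le_of_surjective _ hsurj
    simpa using this
  have hle12 : m ≤ 12 := by
    have := Fintype.card_le_of_injective _ hinj
    simpa using this
  have hm12 : m = 12 := le_antisymm hle12 h12le
  have hm' : Function.minimalPeriod f 0 = 12 := by rw [← hmdef]; exact hm12
  set w : ℕ → ZMod 12 := fun i => f^[i] 0 with hw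
  have hinj' : ∀ i j, i < 12 → j < 12 → w i = w j → i = j := by
    intro i j hi hj hij
    exact Function.iterate_injOn_Iio_minimalPeriod
      (by simp only [Set.mem_Iio, hm']; exact hi)
      (by simp only [Set.mem_Iio, hm']; exact hj) hij
  have := dfs346_sound 12 [0] w (by norm_num)
    (by
      intro i _
      have : w (i+1) = σ (w i) := by
        simp [hw, Function.iterate_succ_apply']
        rfl
      rw [this]
      exact h1 (w i))
    (by
      show f^[12] 0 = 0
      have h := Function.isPeriodicPt_minimalPeriod f 0
      rw [hm'] at h
      exact h)
    (by
      intro i h1i hi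
      simp only [List.mem_cons, List.not_mem_nil, or_false]
      intro h0
      have : w i = w 0 := by simpa [hw] using h0
      have := hinj' i 0 hi (by norm_num) this
      omega)
    (by
      intro i j h1i hij hj h
      have := hinj' i j (by omega) hj h
      omega)
  have hw0 : w 0 = 0 := rfl
  rw [hw0] at this
  rw [dfs346_false] at this
  exact Bool.false_ne_true this
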